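/- Let I be a monomial ideal of R = k[x_1,...,x_d] generated by monomials x^{v_1},...,x^{v_q} all of the same degree r with 2 ≤ r < d, and let J be the r-th Veronese ideal. Then \overline{I^b} = I·\overline{I^{b-1}} for all b ≥ d - ⌊d/r⌋ + 1. -/

import Mathlib

open MvPolynomial Finset

namespace NormalizationAux

variable {d q : ℕ}

def Feas (V : Fin q → Fin d → ℕ) (A : Fin d → ℕ) (b : ℕ) (l : Fin q → ℚ) : Prop :=
  (∀ i, 0 ≤ l i) ∧ (∑ i, l i) = (b : ℚ) ∧ ∀ t, (∑ i, l i * V i t) ≤ (A t : ℚ)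

def IsBasic (V : Fin q → Fin d → ℕ) (A : Fin d → ℕ) (l : Fin q → ℚ) : Prop :=
  ∀ c : Fin q → ℚ, (∀ i, l i = 0 → c i = 0) → (∑ i, c i) = 0 →
    (∀ t, (∑ i, l i * V i t) = (A t : ℚ) → (∑ i, c i * V i t) = 0) → c = 0

noncomputable def meas (V : Fin q → Fin d → ℕ) (A : Fin d → ℕ) (l : Fin q → ℚ) : ℕ :=
  (d + 1) * (Finset.univ.filter (fun i => l i ≠ 0)).card +
    (d - (Finset.univ.filter (fun t => (∑ i, l i * V i t) = (A t : ℚ))).card)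

theorem step (V : Fin q → Fin d → ℕ) (A : Fin d → ℕ) (b : ℕ) (l : Fin q → ℚ)
    (hfeas : Feas V A b l) (hnb : ¬ IsBasic V A l) :
    ∃ l', Feas V A b l' ∧ meas V A l' < meas V A l := by
  classical
  obtain ⟨hpos, hsum, hrow⟩ := hfeas
  rw [IsBasic] at hnb
  push_neg at hnb
  obtain ⟨c, hc1, hc2, hc3, hc4⟩ := hnb
  -- a negative entry of c
  have hneg : ∃ i, c i < 0 := by
    by_contra hcon
    push_neg at hcon
    have : ∀ i ∈ Finset.univ, c i = 0 := by
      intro i _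
      have := (Finset.sum_eq_zero_iff_of_nonneg (fun i _ => hcon i)).mp hc2
      exact this i (Finset.mem_univ i)
    exact hc4 (funext fun i => this i (Finset.mem_univ i))
  obtain ⟨i₀, hi₀⟩ := hneg
  have hcl : ∀ i, c i ≠ 0 → l i ≠ 0 := by
    intro i hci hli
    exact hci (hc1 i hli)
  have hlpos : ∀ i, c i < 0 → 0 < l i :=
    fun i hci => lt_of_le_of_ne (hpos i) (Ne.symm (hcl i (ne_of_lt hci)))
  set E1 : Finset ℚ :=
    (Finset.univ.filter (fun i => c i < 0)).image (fun i => l i / (-c i)) with hE1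
  set E2 : Finset ℚ :=
    (Finset.univ.filter (fun t => (∑ i, l i * V i t) < (A t : ℚ) ∧
      0 < ∑ i, c i * V i t)).image
      (fun t => ((A t : ℚ) - ∑ i, l i * V i t) / (∑ i, c i * V i t)) with hE2
  set E : Finset ℚ := E1 ∪ E2 with hE
  have hne : E.Nonempty := by
    refine ⟨l i₀ / (-c i₀), ?_⟩
    rw [hE]
    apply Finset.mem_union_left
    exact Finset.mem_image.mpr ⟨i₀, Finset.mem_filter.mpr ⟨Finset.mem_univ _, hi₀⟩, rfl⟩
  set ε : ℚ := E.min' hne with hε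
  have hEpos : ∀ x ∈ E, 0 < x := by
    intro x hx
    rw [hE, Finset.mem_union] at hx
    rcases hx with hx | hx
    · obtain ⟨i, hi, rfl⟩ := Finset.mem_image.mp hx
      rw [Finset.mem_filter] at hi
      exact div_pos (hlpos i hi.2) (by linarith [hi.2])
    · obtain ⟨t, ht, rfl⟩ := Finset.mem_image.mp hx
      rw [Finset.mem_filter] at ht
      exact div_pos (by linarith [ht.2.1]) ht.2.2
  have hεpos : 0 < ε := hEpos ε (Finset.min'_mem E hne)
  have hεle1 : ∀ i, c i < 0 → ε ≤ l i / (-c i) := by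
    intro i hi
    apply Finset.min'_le
    rw [hE]
    apply Finset.mem_union_left
    exact Finset.mem_image.mpr ⟨i, Finset.mem_filter.mpr ⟨Finset.mem_univ _, hi⟩, rfl⟩
  have hεle2 : ∀ t, (∑ i, l i * V i t) < (A t : ℚ) → 0 < (∑ i, c i * V i t) →
      ε ≤ ((A t : ℚ) - ∑ i, l i * V i t) / (∑ i, c i * V i t) := by
    intro t h1 h2
    apply Finset.min'_le
    rw [hE]
    apply Finset.mem_union_right
    exact Finset.mem_image.mpr ⟨t, Finset.mem_filter.mpr ⟨Finset.mem_univ _, h1, h2⟩, rfl⟩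
  set l' : Fin q → ℚ := fun i => l i + ε * c i with hl'
  -- basic algebra
  have hrow' : ∀ t, (∑ i, l' i * V i t) =
      (∑ i, l i * V i t) + ε * (∑ i, c i * V i t) := by
    intro t
    rw [Finset.mul_sum, ← Finset.sum_add_distrib]
    exact Finset.sum_congr rfl (fun i _ => by rw [hl']; ring)
  have hnn : ∀ i, 0 ≤ l' i := by
    intro i
    rcases le_or_gt 0 (c i) with h | h
    · have : 0 ≤ ε * c i := mul_nonneg (le_of_lt hεpos) h
      rw [hl']; dsimp only; linarith [hpos i]
    · have h1 := hεle1 i h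
      have h2 : 0 < -c i := by linarith
      rw [le_div_iff₀ h2] at h1
      rw [hl']; dsimp only; nlinarith
  have hfeas' : Feas V A b l' := by
    refine ⟨hnn, ?_, ?_⟩
    · rw [hl']
      rw [Finset.sum_add_distrib, hsum, ← Finset.mul_sum, hc2, mul_zero, add_zero]
    · intro t
      rw [hrow' t]
      rcases le_or_gt (∑ i, c i * V i t) 0 with h | h
      · have : ε * (∑ i, c i * V i t) ≤ 0 := mul_nonpos_of_nonneg_of_nonpos (le_of_lt hεpos) h
        linarith [hrow t]
      · rcases eq_or_lt_of_le (hrow t) with heq | hlt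
        · exfalso
          have := hc3 t heq
          linarith
        · have h1 := hεle2 t hlt h
          rw [le_div_iff₀ h] at h1
          linarith
  -- supp and tight monotonicity
  have hsupp_mono : (Finset.univ.filter (fun i => l' i ≠ 0)) ⊆
      (Finset.univ.filter (fun i => l i ≠ 0)) := by
    intro i hi
    rw [Finset.mem_filter] at hi ⊢
    refine ⟨Finset.mem_univ _, ?_⟩
    intro hli
    apply hi.2
    rw [hl']; dsimp only; rw [hli, hc1 i hli, mul_zero, add_zero]
  have htight_mono : (Finset.univ.filter (fun t => (∑ i, l i * V i t) = (A t : ℚ))) ⊆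
      (Finset.univ.filter (fun t => (∑ i, l' i * V i t) = (A t : ℚ))) := by
    intro t ht
    rw [Finset.mem_filter] at ht ⊢
    refine ⟨Finset.mem_univ _, ?_⟩
    rw [hrow' t, hc3 t ht.2, mul_zero, add_zero]
    exact ht.2
  have htight_le : (Finset.univ.filter (fun t => (∑ i, l' i * V i t) = (A t : ℚ))).card ≤ d := by
    have := Finset.card_le_univ (Finset.univ.filter (fun t => (∑ i, l' i * V i t) = (A t : ℚ)))
    simpa using this
  -- the minimum is attained
  have hmem : ε ∈ E1 ∪ E2 := Finset.min'_mem E hne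
  refine ⟨l', hfeas', ?_⟩
  rcases Finset.mem_union.mp hmem with hx | hx
  · -- a support element dies
    obtain ⟨i₁, hi₁, hval⟩ := Finset.mem_image.mp hx
    rw [Finset.mem_filter] at hi₁
    have hci₁ : c i₁ < 0 := hi₁.2
    have hzero : l' i₁ = 0 := by
      rw [hl']; dsimp only
      rw [← hval]
      have h2 : c i₁ ≠ 0 := ne_of_lt hci₁
      rw [div_mul_eq_mul_div, div_neg, mul_div_assoc, div_self h2, mul_one]
      ring
    have hsupp_lt : (Finset.univ.filter (fun i => l' i ≠ 0)).card <
        (Finset.univ.filter (fun i => l i ≠ 0)).card := by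
      apply Finset.card_lt_card
      rw [Finset.ssubset_iff_of_subset hsupp_mono]
      refine ⟨i₁, ?_, ?_⟩
      · rw [Finset.mem_filter]
        exact ⟨Finset.mem_univ _, hcl i₁ (ne_of_lt hci₁)⟩
      · rw [Finset.mem_filter]
        rintro ⟨-, hn⟩
        exact hn hzero
    rw [meas, meas]
    have h9 : (d+1) * ((Finset.univ.filter (fun i => l' i ≠ 0)).card + 1) ≤
        (d+1) * (Finset.univ.filter (fun i => l i ≠ 0)).card :=
      Nat.mul_le_mul_left _ hsupp_lt
    rw [Nat.mul_add, mul_one] at h9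
    omega
  · -- a new tight row appears
    obtain ⟨t₁, ht₁, hval⟩ := Finset.mem_image.mp hx
    rw [Finset.mem_filter] at ht₁
    obtain ⟨-, hslack, hrate⟩ := ht₁
    have htight_new : (∑ i, l' i * V i t₁) = (A t₁ : ℚ) := by
      rw [hrow' t₁, ← hval]
      have h2 : (∑ i, c i * V i t₁) ≠ 0 := ne_of_gt hrate
      field_simp
      ring
    have htight_lt : (Finset.univ.filter (fun t => (∑ i, l i * V i t) = (A t : ℚ))).card <
        (Finset.univ.filter (fun t => (∑ i, l' i * V i t) = (A t : ℚ))).card := by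
      apply Finset.card_lt_card
      rw [Finset.ssubset_iff_of_subset htight_mono]
      refine ⟨t₁, ?_, ?_⟩
      · rw [Finset.mem_filter]
        exact ⟨Finset.mem_univ _, htight_new⟩
      · rw [Finset.mem_filter]
        rintro ⟨-, hn⟩
        linarith [hslack, hn]
    rw [meas, meas]
    have hsupp_le : (Finset.univ.filter (fun i => l' i ≠ 0)).card ≤
        (Finset.univ.filter (fun i => l i ≠ 0)).card := Finset.card_le_card hsupp_mono
    have h9 : (d+1) * (Finset.univ.filter (fun i => l' i ≠ 0)).card ≤
        (d+1) * (Finset.univ.filter (fun i => l i ≠ 0)).card :=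
      Nat.mul_le_mul_left _ hsupp_le
    omega

theorem exists_basic (V : Fin q → Fin d → ℕ) (A : Fin d → ℕ) (b : ℕ) (l : Fin q → ℚ)
    (hl : Feas V A b l) : ∃ m, Feas V A b m ∧ IsBasic V A m := by
  classical
  suffices H : ∀ n (l : Fin q → ℚ), meas V A l ≤ n → Feas V A b l →
      ∃ m, Feas V A b m ∧ IsBasic V A m by
    exact H (meas V A l) l le_rfl hl
  intro n
  induction n with
  | zero =>
    intro l hml hfeas
    by_cases hB : IsBasic V A l
    · exact ⟨l, hfeas, hB⟩
    · obtain ⟨l', -, hlt⟩ := step V A b l hfeas hB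
      omega
  | succ n ih =>
    intro l hml hfeas
    by_cases hB : IsBasic V A l
    · exact ⟨l, hfeas, hB⟩
    · obtain ⟨l', hfeas', hlt⟩ := step V A b l hfeas hB
      exact ih l' (by omega) hfeas'

theorem counting {r b : ℕ} (hr : 2 ≤ r) (V : Fin q → Fin d → ℕ)
    (hV : ∀ i, (∑ t, V i t) = r) (A : Fin d → ℕ) (hb : d - d / r + 1 ≤ b)
    (m : Fin q → ℚ) (hm : Feas V A b m) (hbasic : IsBasic V A m)
    (hlt : ∀ j, m j < 1) : False := by
  classical
  obtain ⟨hpos, hsum, hrow⟩ := hm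
  set sup : Finset (Fin q) := Finset.univ.filter (fun i => m i ≠ 0) with hsup
  set s : ℕ := sup.card with hs
  set S : Finset (Fin d) :=
    (Finset.univ.filter (fun t => (∑ i, m i * V i t) = (A t : ℚ))).filter
      (fun t => ∃ i ∈ sup, V i t ≠ 0) with hS
  have hb1 : 1 ≤ b := le_trans (Nat.le_add_left 1 _) hb
  -- sums over support
  have hsum_sup : ∀ (f : Fin q → ℚ), (∀ i, i ∉ sup → f i = 0) →
      (∑ i, f i) = ∑ i ∈ sup, f i := by
    intro f hf
    exact (Finset.sum_subset (Finset.subset_univ sup) (fun x _ hx => hf x hx)).symm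
  have hm_off : ∀ i, i ∉ sup → m i = 0 := by
    intro i hi
    by_contra hne
    exact hi (Finset.mem_filter.mpr ⟨Finset.mem_univ i, hne⟩)
  have hm_sup_sum : (∑ i ∈ sup, m i) = (b : ℚ) := by
    rw [← hsum_sup m hm_off, hsum]
  -- F1 : support nonempty
  have hsup_ne : sup.Nonempty := by
    rcases Finset.eq_empty_or_nonempty sup with h | h
    · exfalso
      rw [h, Finset.sum_empty] at hm_sup_sum
      have : (1:ℚ) ≤ (b:ℚ) := by exact_mod_cast hb1
      linarith
    · exact h
  -- F2 : b < s
  have hbs : b + 1 ≤ s := by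
    have h1 : (∑ i ∈ sup, m i) < ∑ i ∈ sup, (1:ℚ) :=
      Finset.sum_lt_sum_of_nonempty hsup_ne (fun i _ => hlt i)
    rw [hm_sup_sum, Finset.sum_const, nsmul_eq_mul, mul_one] at h1
    have : b < s := by exact_mod_cast h1
    omega
  -- a common construction: from a relation on the support build a direction
  -- F3 : s ≤ d
  have hsd : s ≤ d := by
    by_contra hcon
    push_neg at hcon
    set u : ↥sup → (Fin d → ℚ) := fun i => fun t => (V i t : ℚ) with hu
    have hnli : ¬ LinearIndependent ℚ u := by
      intro hLI
      have h1 := hLI.fintype_card_le_finrank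
      rw [Module.finrank_fintype_fun_eq_card, Fintype.card_fin, Fintype.card_coe] at h1
      omega
    obtain ⟨g, hg0, i₀, hgi₀⟩ := Fintype.not_linearIndependent_iff.mp hnli
    set c : Fin q → ℚ := fun i => if h : i ∈ sup then g ⟨i, h⟩ else 0 with hc
    have hc_off : ∀ i, i ∉ sup → c i = 0 := fun i hi => dif_neg hi
    have hc_sup : ∀ (i : ↥sup), c ↑i = g i := fun i => dif_pos i.2
    have hrow0 : ∀ t, (∑ i, c i * V i t) = 0 := by
      intro t
      rw [hsum_sup _ (fun i hi => by rw [hc_off i hi, zero_mul])]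
      have h2 : (∑ i ∈ sup, c i * V i t) = ∑ i : ↥sup, g i * V (↑i) t := by
        rw [← Finset.sum_coe_sort sup (fun i => c i * V i t)]
        exact Finset.sum_congr rfl (fun i _ => by rw [hc_sup i])
      rw [h2]
      have h3 := congrFun hg0 t
      simpa [u, Finset.sum_apply, Pi.smul_apply, smul_eq_mul] using h3
    have hcsum : (∑ i, c i) = 0 := by
      have h4 : (∑ t, ∑ i, c i * V i t) = 0 :=
        Finset.sum_eq_zero (fun t _ => hrow0 t)
      rw [Finset.sum_comm] at h4
      have h5 : (∑ i, ∑ t : Fin d, c i * V i t) = ∑ i, c i * r := by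
        refine Finset.sum_congr rfl (fun i _ => ?_)
        rw [← Finset.mul_sum]
        congr 1
        exact_mod_cast congrArg (Nat.cast : ℕ → ℚ) (hV i)
      rw [h5, ← Finset.sum_mul] at h4
      have hrne : (r:ℚ) ≠ 0 := by positivity
      exact (mul_eq_zero.mp h4).resolve_right hrne
    have := hbasic c (fun i hi => hc_off i (by simp [hsup, hi])) hcsum
      (fun t _ => hrow0 t)
    rw [hc] at this
    have := congrFun this i₀
    rw [dif_pos i₀.2] at this
    exact hgi₀ (by simpa using this)
  -- F4 : s ≤ S.card + 1
  have hsS : s ≤ S.card + 1 := by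
    by_contra hcon
    push_neg at hcon
    set w : ↥sup → ((↥S → ℚ) × ℚ) :=
      fun i => (fun t => (V i (↑t) : ℚ), 1) with hw
    have hfr : Module.finrank ℚ ((↥S → ℚ) × ℚ) = S.card + 1 := by
      rw [Module.finrank_prod, Module.finrank_fintype_fun_eq_card, Fintype.card_coe,
        Module.finrank_self]
    have hnli : ¬ LinearIndependent ℚ w := by
      intro hLI
      have h1 := hLI.fintype_card_le_finrank
      rw [hfr, Fintype.card_coe] at h1
      omega
    obtain ⟨g, hg0, i₀, hgi₀⟩ := Fintype.not_linearIndependent_iff.mp hnli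
    set c : Fin q → ℚ := fun i => if h : i ∈ sup then g ⟨i, h⟩ else 0 with hc
    have hc_off : ∀ i, i ∉ sup → c i = 0 := fun i hi => dif_neg hi
    have hc_sup : ∀ (i : ↥sup), c ↑i = g i := fun i => dif_pos i.2
    have hcsum : (∑ i, c i) = 0 := by
      rw [hsum_sup _ hc_off]
      have h2 : (∑ i ∈ sup, c i) = ∑ i : ↥sup, g i := by
        rw [← Finset.sum_coe_sort sup c]
        exact Finset.sum_congr rfl (fun i _ => hc_sup i)
      rw [h2]
      have h3 := congrArg Prod.snd hg0
      simpa [w, Prod.snd_sum] using h3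
    have hrow0 : ∀ t, (∑ i, m i * V i t) = (A t : ℚ) → (∑ i, c i * V i t) = 0 := by
      intro t ht
      by_cases hex : ∃ i ∈ sup, V i t ≠ 0
      · have htS : t ∈ S := by
          rw [hS]
          exact Finset.mem_filter.mpr ⟨Finset.mem_filter.mpr ⟨Finset.mem_univ t, ht⟩, hex⟩
        rw [hsum_sup _ (fun i hi => by rw [hc_off i hi, zero_mul])]
        have h2 : (∑ i ∈ sup, c i * V i t) = ∑ i : ↥sup, g i * V (↑i) t := by
          rw [← Finset.sum_coe_sort sup (fun i => c i * V i t)]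
          exact Finset.sum_congr rfl (fun i _ => by rw [hc_sup i])
        rw [h2]
        have h3 := congrArg Prod.fst hg0
        rw [Prod.fst_sum] at h3
        have h4 := congrFun h3 ⟨t, htS⟩
        simpa [w, Finset.sum_apply, Pi.smul_apply, smul_eq_mul] using h4
      · push_neg at hex
        rw [hsum_sup _ (fun i hi => by rw [hc_off i hi, zero_mul])]
        refine Finset.sum_eq_zero (fun i hi => ?_)
        rw [hex i hi]
        simp
    have := hbasic c (fun i hi => hc_off i (by simp [hsup, hi])) hcsum hrow0
    rw [hc] at this
    have := congrFun this i₀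
    rw [dif_pos i₀.2] at this
    exact hgi₀ (by simpa using this)
  -- F5 : S.card ≤ r * (s - b)
  have hScount : (S.card : ℚ) ≤ (r : ℚ) * ((s : ℚ) - (b : ℚ)) := by
    set R : Fin d → ℚ := fun t => ∑ i ∈ sup, (1 - m i) * (V i t : ℚ) with hR
    have hterm : ∀ (i : Fin q) (t : Fin d), 0 ≤ (1 - m i) * (V i t : ℚ) := by
      intro i t
      have h1 : (0:ℚ) ≤ 1 - m i := by linarith [hlt i]
      exact mul_nonneg h1 (Nat.cast_nonneg _)
    have hRnonneg : ∀ t, 0 ≤ R t := by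
      intro t
      exact Finset.sum_nonneg (fun i _ => hterm i t)
    have hRS : ∀ t ∈ S, (1:ℚ) ≤ R t := by
      intro t ht
      rw [hS, Finset.mem_filter, Finset.mem_filter] at ht
      obtain ⟨⟨-, htight⟩, i₁, hi₁, hVi₁⟩ := ht
      -- R t = N_t - A t with N_t natural
      have h1 : R t = (∑ i ∈ sup, (V i t : ℚ)) - (A t : ℚ) := by
        calc R t = ∑ i ∈ sup, ((V i t : ℚ) - m i * V i t) :=
              Finset.sum_congr rfl (fun i _ => by ring)
          _ = (∑ i ∈ sup, (V i t : ℚ)) - ∑ i ∈ sup, m i * V i t :=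
              Finset.sum_sub_distrib _ _
          _ = (∑ i ∈ sup, (V i t : ℚ)) - (A t : ℚ) := by
              rw [← htight, hsum_sup _ (fun i hi => by rw [hm_off i hi, zero_mul])]
      have h2 : 0 < R t := by
        refine Finset.sum_pos' (fun i _ => hterm i t) ⟨i₁, hi₁, ?_⟩
        have hv1 : (1:ℚ) ≤ (V i₁ t : ℚ) := by
          exact_mod_cast Nat.one_le_iff_ne_zero.mpr hVi₁
        have := hlt i₁
        nlinarith
      have hcast : (∑ i ∈ sup, (V i t : ℚ)) = ((∑ i ∈ sup, V i t : ℕ) : ℚ) := by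
        push_cast
        rfl
      have h3 : A t < ∑ i ∈ sup, V i t := by
        by_contra hcon
        push_neg at hcon
        have : ((∑ i ∈ sup, V i t : ℕ) : ℚ) ≤ (A t : ℚ) := by exact_mod_cast hcon
        rw [← hcast] at this
        linarith [h2, h1.symm ▸ h2]
      have h4 : (A t : ℚ) + 1 ≤ ((∑ i ∈ sup, V i t : ℕ) : ℚ) := by exact_mod_cast h3
      rw [← hcast] at h4
      linarith [h1]
    have hcard_le : (S.card : ℚ) ≤ ∑ t ∈ S, R t := by
      have := Finset.card_nsmul_le_sum S R 1 hRS
      simpa [nsmul_eq_mul, mul_one] using this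
    have htot : (∑ t ∈ S, R t) ≤ ∑ t : Fin d, R t :=
      Finset.sum_le_sum_of_subset_of_nonneg (Finset.subset_univ S)
        (fun t _ _ => hRnonneg t)
    have hswap : (∑ t : Fin d, R t) = (r:ℚ) * ((s:ℚ) - (b:ℚ)) := by
      rw [hR]
      rw [Finset.sum_comm]
      have h5 : ∀ i ∈ sup, (∑ t : Fin d, (1 - m i) * (V i t : ℚ)) = (1 - m i) * r := by
        intro i _
        rw [← Finset.mul_sum]
        congr 1
        exact_mod_cast congrArg (Nat.cast : ℕ → ℚ) (hV i)
      rw [Finset.sum_congr rfl h5]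
      have h6 : (∑ i ∈ sup, (1 - m i) * (r:ℚ)) = (r:ℚ) * ∑ i ∈ sup, (1 - m i) := by
        rw [Finset.mul_sum]
        exact Finset.sum_congr rfl (fun i _ => by ring)
      rw [h6]
      congr 1
      rw [Finset.sum_sub_distrib, Finset.sum_const, hm_sup_sum, nsmul_eq_mul, mul_one, hs]
    linarith
  -- final arithmetic
  have hfinal : (r:ℚ) * b + s ≤ (r:ℚ) * s + 1 := by
    have h6 : ((s:ℚ)) - 1 ≤ (S.card : ℚ) := by
      have : ((S.card : ℕ) : ℚ) + 1 ≥ (s : ℚ) := by exact_mod_cast hsS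
      linarith
    linarith [hScount]
  have hfinalN : r * b + s ≤ r * s + 1 := by exact_mod_cast hfinal
  have e2 : r * (d / r) ≤ d := by
    rw [mul_comm]
    exact Nat.div_mul_le_self d r
  have e4 : r * (d - d / r + 1) ≤ r * b := Nat.mul_le_mul_left r hb
  have e5 : r * (d - d / r + 1) = r * (d - d / r) + r := by rw [Nat.mul_add, mul_one]
  have e5b : r * (d - d / r) = r * d - r * (d / r) := Nat.mul_sub r d (d / r)
  have e6 : r * d = r * s + r * (d - s) := by
    rw [← Nat.mul_add]
    congr 1
    omega
  have e7 : (d - s) ≤ r * (d - s) := Nat.le_mul_of_pos_left _ (by omega)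
  omega


theorem core {r b : ℕ} (hr : 2 ≤ r) (V : Fin q → Fin d → ℕ)
    (hV : ∀ i, (∑ t, V i t) = r) (A : Fin d → ℕ) (hb : d - d / r + 1 ≤ b)
    (l : Fin q → ℚ) (hl : Feas V A b l) :
    ∃ μ, Feas V A b μ ∧ ∃ j, 1 ≤ μ j := by
  by_contra h
  push_neg at h
  obtain ⟨m, hm, hbasic⟩ := exists_basic V A b l hl
  exact counting hr V hV A hb m hm hbasic (fun j => h m hm j)


theorem rat_to_nat {b : ℕ} (V : Fin q → Fin d → ℕ) (A : Fin d → ℕ)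
    (μ : Fin q → ℚ) (hμ : Feas V A b μ) (j : Fin q) (hj : 1 ≤ μ j) :
    ∃ N : ℕ, 0 < N ∧ ∃ n : Fin q → ℕ, (∑ i, n i) = b * N ∧ N ≤ n j ∧
      (∀ t, (∑ i, n i * V i t) ≤ N * A t) := by
  obtain ⟨hpos, hsum, hrow⟩ := hμ
  set N : ℕ := ∏ i, (μ i).den with hN
  have hNpos : 0 < N := Finset.prod_pos (fun i _ => (μ i).pos)
  -- each μ i * N is a nonneg integer
  have hint : ∀ i, ∃ m : ℕ, (m : ℚ) = μ i * N := by
    intro i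
    have hd : (μ i * ((μ i).den : ℚ)) = ((μ i).num : ℚ) := Rat.mul_den_eq_num _
    have : (N : ℚ) = ((μ i).den : ℚ) * (∏ l ∈ Finset.univ.erase i, ((μ l).den : ℚ)) := by
      rw [hN]
      push_cast
      rw [← Finset.prod_erase_mul _ _ (Finset.mem_univ i)]
      ring
    refine ⟨((μ i).num.toNat) * ∏ l ∈ Finset.univ.erase i, (μ l).den, ?_⟩
    have hnum : (0:ℤ) ≤ (μ i).num := Rat.num_nonneg.mpr (hpos i)
    have htn : (((μ i).num.toNat : ℕ) : ℚ) = ((μ i).num : ℚ) := by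
      exact_mod_cast congrArg (Int.cast : ℤ → ℚ) (Int.toNat_of_nonneg hnum)
    push_cast
    rw [htn, this, ← mul_assoc, hd]
  choose n hn using hint
  refine ⟨N, hNpos, n, ?_, ?_, ?_⟩
  · have : ((∑ i, n i : ℕ) : ℚ) = ((b * N : ℕ) : ℚ) := by
      push_cast
      rw [Finset.sum_congr rfl (fun i _ => hn i), ← Finset.sum_mul, hsum]
    exact_mod_cast this
  · have : (N : ℚ) ≤ (n j : ℚ) := by
      rw [hn j]
      nlinarith [hj, show (0:ℚ) < N from by exact_mod_cast hNpos]
    exact_mod_cast this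
  · intro t
    have : ((∑ i, n i * V i t : ℕ) : ℚ) ≤ ((N * A t : ℕ) : ℚ) := by
      push_cast
      calc (∑ i, (n i : ℚ) * V i t) = (∑ i, μ i * V i t) * N := by
            rw [Finset.sum_mul]
            exact Finset.sum_congr rfl (fun i _ => by rw [hn i]; ring)
        _ ≤ (A t : ℚ) * N := by
            have := hrow t
            have hN0 : (0:ℚ) ≤ N := by positivity
            nlinarith
        _ = (N:ℚ) * A t := by ring
    exact_mod_cast this

variable {k : Type*} [Field k] (v : Fin q → (Fin d →₀ ℕ))

def genSet (n : ℕ) : Set (Fin d →₀ ℕ) :=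
  {u | ∃ c : Fin q → ℕ, (∑ i, c i) = n ∧ u = ∑ i, c i • v i}

theorem update_sum (c : Fin q → ℕ) (i : Fin q) (e : ℕ) :
    (∑ j, Function.update c i (c i + e) j) = (∑ j, c j) + e := by
  rw [← Finset.sum_erase_add _ _ (Finset.mem_univ i),
      ← Finset.sum_erase_add _ c (Finset.mem_univ i)]
  have h1 : ∀ j ∈ Finset.univ.erase i, Function.update c i (c i + e) j = c j := by
    intro j hj
    exact Function.update_of_ne (Finset.ne_of_mem_erase hj) _ _
  rw [Finset.sum_congr rfl h1, Function.update_self]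
  ring

theorem update_sum_smul (c : Fin q → ℕ) (i : Fin q) (e : ℕ) :
    (∑ j, Function.update c i (c i + e) j • v j) = e • v i + ∑ j, c j • v j := by
  rw [← Finset.sum_erase_add _ _ (Finset.mem_univ i),
      ← Finset.sum_erase_add _ (fun j => c j • v j) (Finset.mem_univ i)]
  have h1 : ∀ j ∈ Finset.univ.erase i, Function.update c i (c i + e) j • v j = c j • v j := by
    intro j hj
    rw [Function.update_of_ne (Finset.ne_of_mem_erase hj)]
  rw [Finset.sum_congr rfl h1, Function.update_self, add_smul]
  abel

theorem genSet_succ_mem {n : ℕ} {w : Fin d →₀ ℕ} (hw : w ∈ genSet v (n + 1)) :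
    ∃ i, ∃ u ∈ genSet v n, w = v i + u := by
  obtain ⟨c, hc, rfl⟩ := hw
  have hpos : ∃ i ∈ Finset.univ, 0 < c i := by
    by_contra hcon; push_neg at hcon
    simp only [Nat.le_zero] at hcon
    rw [Finset.sum_eq_zero hcon] at hc; exact Nat.succ_ne_zero n hc.symm
  obtain ⟨i, -, hi⟩ := hpos
  set c' : Fin q → ℕ := Function.update c i (c i - 1) with hc'
  have hup : Function.update c' i (c' i + 1) = c := by
    funext j
    by_cases hji : j = i
    · subst hji; simp [hc', Nat.sub_add_cancel hi]
    · simp [hc', Function.update_of_ne hji]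
  refine ⟨i, ∑ j, c' j • v j, ⟨c', ?_, rfl⟩, ?_⟩
  · have := update_sum c' i 1
    rw [hup] at this
    omega
  · have := update_sum_smul v c' i 1
    rw [hup] at this
    rw [this, one_smul]

theorem genSet_succ_mem' {n : ℕ} (i : Fin q) {u : Fin d →₀ ℕ} (hu : u ∈ genSet v n) :
    v i + u ∈ genSet v (n + 1) := by
  obtain ⟨c, hc, rfl⟩ := hu
  exact ⟨Function.update c i (c i + 1), by rw [update_sum, hc],
    by rw [update_sum_smul, one_smul]⟩

theorem Ipow (I : Ideal (MvPolynomial (Fin d) k))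
    (hI : I = Ideal.span (Set.range fun i => monomial (v i) (1 : k))) (n : ℕ) :
    I ^ n = Ideal.span ((fun s => monomial s (1 : k)) '' genSet v n) := by
  induction n with
  | zero =>
    have h0 : genSet v 0 = {0} := by
      ext u
      simp only [genSet, Set.mem_setOf_eq, Set.mem_singleton_iff]
      constructor
      · rintro ⟨c, hc, rfl⟩
        have : ∀ i ∈ Finset.univ, c i = 0 := Finset.sum_eq_zero_iff.mp hc
        rw [Finset.sum_eq_zero (fun i hi => by rw [this i hi, zero_smul])]
      · rintro rfl
        exact ⟨0, by simp, by simp⟩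
    rw [h0, pow_zero]
    simp only [Set.image_singleton, monomial_zero', C_1]
    rw [Ideal.span_singleton_one, Ideal.one_eq_top]
  | succ n ih =>
    rw [pow_succ, mul_comm, ih, hI, Ideal.span_mul_span]
    apply le_antisymm
    · rw [Ideal.span_le]
      intro x hx
      rw [Set.mem_mul] at hx
      obtain ⟨s, ⟨i, rfl⟩, t, ⟨u, hu, rfl⟩, rfl⟩ := hx
      rw [monomial_mul, one_mul]
      exact Ideal.subset_span ⟨v i + u, genSet_succ_mem' v i hu, rfl⟩
    · rw [Ideal.span_le]
      rintro x ⟨w, hw, rfl⟩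
      obtain ⟨i, u, hu, rfl⟩ := genSet_succ_mem v hw
      apply Ideal.subset_span
      simp only [Set.mem_iUnion, Set.mem_range, Set.mem_image, Set.mem_singleton_iff]
      exact ⟨monomial (v i) 1, ⟨i, rfl⟩, monomial u 1, ⟨u, hu, rfl⟩, by dsimp only; rw [monomial_mul, one_mul]⟩

theorem mem_pow_iff (I : Ideal (MvPolynomial (Fin d) k))
    (hI : I = Ideal.span (Set.range fun i => monomial (v i) (1 : k))) (n : ℕ)
    (u : Fin d →₀ ℕ) :
    monomial u (1 : k) ∈ I ^ n ↔
      ∃ c : Fin q → ℕ, (∑ i, c i) = n ∧ (∑ i, c i • v i) ≤ u := by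
  rw [Ipow v I hI n, mem_ideal_span_monomial_image]
  have hsupp : (monomial u (1 : k)).support = {u} := by
    classical rw [support_monomial, if_neg one_ne_zero]
  rw [hsupp]
  simp only [Finset.mem_singleton, forall_eq]
  constructor
  · rintro ⟨si, ⟨c, hc, rfl⟩, hle⟩
    exact ⟨c, hc, hle⟩
  · rintro ⟨c, hc, hle⟩
    exact ⟨∑ i, c i • v i, ⟨c, hc, rfl⟩, hle⟩

end NormalizationAux

/-- The integral closure of the `n`-th power of a monomial ideal `I`,
described as the monomial ideal generated by the monomials `x^a` such that
`x^(m•a) ∈ I^(n*m)` for some positive integer `m`. -/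
noncomputable def intCl {k : Type*} [Field k] {σ : Type*}
    (I : Ideal (MvPolynomial σ k)) (n : ℕ) : Ideal (MvPolynomial σ k) :=
  Ideal.span {p | ∃ a : σ →₀ ℕ, p = monomial a (1 : k) ∧
    ∃ m : ℕ, 0 < m ∧ monomial (m • a) (1 : k) ∈ I ^ (n * m)}

/-- If `I` is a monomial ideal of `k[x 1, …, x d]` generated by monomials all of the
same degree `r` with `2 ≤ r < d`, then `\overline{I^b} = I \overline{I^(b-1)}` for
all `b ≥ d - ⌊d / r⌋ + 1`. -/
theorem normalization_stabilizes_equigenerated {k : Type*} [Field k]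
    (d q r : ℕ) (hq : 0 < q) (hr : 2 ≤ r) (hrd : r < d)
    (v : Fin q → (Fin d →₀ ℕ)) (hdeg : ∀ i, (∑ j, v i j) = r)
    (I : Ideal (MvPolynomial (Fin d) k))
    (hI : I = Ideal.span (Set.range fun i => monomial (v i) (1 : k)))
    (b : ℕ) (hb : d - d / r + 1 ≤ b) :
    intCl I b = I * intCl I (b - 1) := by
  have hb1 : 1 ≤ b := le_trans (Nat.le_add_left 1 _) hb
  set V : Fin q → Fin d → ℕ := fun i t => v i t with hV
  have hdeg' : ∀ i, (∑ t, V i t) = r := hdeg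
  apply le_antisymm
  · -- hard direction
    rw [intCl, Ideal.span_le]
    rintro p ⟨a, rfl, m, hm, hmem⟩
    rw [NormalizationAux.mem_pow_iff v I hI] at hmem
    obtain ⟨c, hcsum, hcle⟩ := hmem
    -- set up the rational feasible point
    have hmQ : (0:ℚ) < m := by exact_mod_cast hm
    have hfeas : NormalizationAux.Feas V (fun t => a t) b (fun i => (c i : ℚ) / m) := by
      refine ⟨fun i => by positivity, ?_, ?_⟩
      · rw [← Finset.sum_div]
        rw [div_eq_iff (ne_of_gt hmQ)]
        exact_mod_cast hcsum
      · intro t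
        have h1 : (∑ i, c i * V i t) ≤ m * a t := by
          have := Finsupp.le_def.mp hcle t
          simpa [Finsupp.finset_sum_apply, Finsupp.smul_apply, smul_eq_mul] using this
        have h1Q : ((∑ i, c i * V i t : ℕ) : ℚ) ≤ ((m * a t : ℕ) : ℚ) := by exact_mod_cast h1
        push_cast at h1Q
        rw [show (∑ i, ((c i : ℚ) / m) * V i t) = (∑ i, (c i : ℚ) * V i t) / m by
          rw [Finset.sum_div]; exact Finset.sum_congr rfl fun i _ => by ring]
        rw [div_le_iff₀ hmQ]
        linarith
    obtain ⟨μ, hμfeas, j, hj⟩ := NormalizationAux.core hr V hdeg' (fun t => a t) hb _ hfeas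
    obtain ⟨N, hN, n, hnsum, hnj, hnrow⟩ := NormalizationAux.rat_to_nat V (fun t => a t) μ hμfeas j hj
    -- v j ≤ a coordinatewise
    have hvja : ∀ t, v j t ≤ a t := by
      intro t
      have h2 : N * v j t ≤ n j * V j t := Nat.mul_le_mul_right _ hnj
      have h3 : n j * V j t ≤ ∑ i, n i * V i t :=
        Finset.single_le_sum (f := fun i => n i * V i t) (fun i _ => Nat.zero_le _)
          (Finset.mem_univ j)
      have := le_trans h2 (le_trans h3 (hnrow t))
      exact Nat.le_of_mul_le_mul_left this hN
    set a' : Fin d →₀ ℕ := a - v j with ha'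
    have ha'apply : ∀ t, a' t = a t - v j t := fun t => Finsupp.tsub_apply a (v j) t
    have hsplit : a = v j + a' := by
      ext t
      rw [Finsupp.add_apply, ha'apply t]
      have := hvja t
      omega
    -- membership of a' in intCl I (b-1)
    have hmem' : monomial (N • a') (1:k) ∈ I ^ ((b-1) * N) := by
      rw [NormalizationAux.mem_pow_iff v I hI]
      refine ⟨Function.update n j (n j - N), ?_, ?_⟩
      · have hupeq : Function.update (Function.update n j (n j - N)) j
            (Function.update n j (n j - N) j + N) = n := by
          funext i
          by_cases hij : i = j
          · subst hij; simp [Nat.sub_add_cancel hnj]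
          · simp [Function.update_of_ne hij]
        have h0 := NormalizationAux.update_sum (Function.update n j (n j - N)) j N
        rw [hupeq] at h0
        have e1 : (b-1)*N = b*N - 1*N := by rw [Nat.sub_mul]
        have e2 : 1*N ≤ b*N := Nat.mul_le_mul_right N hb1
        omega
      · rw [Finsupp.le_def]
        intro t
        have hL : (∑ i, Function.update n j (n j - N) i • v i) t
            = ∑ i, Function.update n j (n j - N) i * V i t := by
          simp [Finsupp.finset_sum_apply, Finsupp.smul_apply, smul_eq_mul, hV]
        have hsum_split : (∑ i, Function.update n j (n j - N) i * V i t)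
            = (∑ i, n i * V i t) - N * V j t := by
          rw [← Finset.sum_erase_add _ _ (Finset.mem_univ j),
              ← Finset.sum_erase_add _ (fun i => n i * V i t) (Finset.mem_univ j)]
          have h1 : ∀ i ∈ Finset.univ.erase j,
              Function.update n j (n j - N) i * V i t = n i * V i t := by
            intro i hi
            rw [Function.update_of_ne (Finset.ne_of_mem_erase hi)]
          rw [Finset.sum_congr rfl h1, Function.update_self]
          have : N * V j t ≤ n j * V j t := Nat.mul_le_mul_right _ hnj
          have : (n j - N) * V j t = n j * V j t - N * V j t := Nat.sub_mul _ _ _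
          omega
        rw [hL, hsum_split, Finsupp.smul_apply, ha'apply t, smul_eq_mul]
        have h4 := hnrow t
        have h5 : N * V j t ≤ ∑ i, n i * V i t :=
          le_trans (Nat.mul_le_mul_right _ hnj)
            (Finset.single_le_sum (f := fun i => n i * V i t) (fun i _ => Nat.zero_le _)
              (Finset.mem_univ j))
        have h6 : (v j) t ≤ a t := hvja t
        simp only [hV] at h4 h5 ⊢
        rw [Nat.mul_sub N (a t) ((v j) t)]
        omega
    have : monomial a (1:k) = monomial (v j) 1 * monomial a' 1 := by
      rw [monomial_mul, one_mul, ← hsplit]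
    rw [this]
    refine Ideal.mul_mem_mul ?_ ?_
    · rw [hI]; exact Ideal.subset_span ⟨j, rfl⟩
    · exact Ideal.subset_span ⟨a', rfl, N, hN, hmem'⟩
  · -- easy direction
    rw [hI]
    set J : Ideal (MvPolynomial (Fin d) k) :=
      Ideal.span (Set.range fun i => monomial (v i) (1:k)) with hJ
    rw [intCl, intCl, Ideal.span_mul_span, Ideal.span_le]
    intro x hx
    rw [Set.mem_mul] at hx
    obtain ⟨s, ⟨i, rfl⟩, t, ⟨a, rfl, m, hm, hmem⟩, rfl⟩ := hx
    rw [monomial_mul, one_mul]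
    apply Ideal.subset_span
    refine ⟨v i + a, rfl, m, hm, ?_⟩
    rw [NormalizationAux.mem_pow_iff v J rfl] at hmem ⊢
    obtain ⟨c, hcsum, hcle⟩ := hmem
    refine ⟨Function.update c i (c i + m), ?_, ?_⟩
    · rw [NormalizationAux.update_sum]
      have e1 : (b-1)*m = b*m - 1*m := by rw [Nat.sub_mul]
      have e2 : 1*m ≤ b*m := Nat.mul_le_mul_right m hb1
      omega
    · rw [NormalizationAux.update_sum_smul, smul_add]
      exact add_le_add_right hcle (m • v i)
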